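/- Persistence of the optimal action (equation (15)). Let V : X → ℝ be monotone with respect to ⪯ and let w ∈ W. Let X, X' ∈ X satisfy: A'_{r,k} = A_{r,k} and D'_k = D_k for all k; A'_{d,k} ≥ A_{d,k} for every k with w_k = (1,2); and A'_{d,k} = A_{d,k} for every other k. If J_V(X, w) ≤ J_V(X, w'') for all w'' ∈ W, then J_V(X', w) ≤ J_V(X', w'') for all w'' ∈ W; i.e., if w is an optimal action at X then w is an optimal action at X'. -/

import Mathlib

namespace AoI

/-- Per-device control action: idle `(0,0)`, continue the current in-transmission
update `(1,1)`, or sample and transmit a new update `(1,2)`. -/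
inductive Act : Type
  | idle : Act
  | cont : Act
  | new  : Act
  deriving DecidableEq

instance : Fintype Act :=
  ⟨{Act.idle, Act.cont, Act.new}, by intro a; cases a <;> simp⟩

/-- Per-device state `(A_d, A_r, D)`. -/
abbrev S : Type := ℕ × ℕ × ℕ

/-- Success successor under action `(1,1)`. -/
def sCont (L Ahd Ahr : ℕ) (x : S) : S :=
  if x.2.2 = 1 then (0, min (x.1 + 1) Ahr, L)
  else (min (x.1 + 1) Ahd, min (x.2.1 + 1) Ahr, x.2.2 - 1)

/-- Failure successor under `(1,1)`; this is also the unscheduled successor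
`X_{k,un}` under action `(0,0)`. -/
def fCont (Ahd Ahr : ℕ) (x : S) : S :=
  (min (x.1 + 1) Ahd, min (x.2.1 + 1) Ahr, x.2.2)

/-- Success successor under action `(1,2)`. -/
def sNew (L Ahr : ℕ) (x : S) : S := (1, min (x.2.1 + 1) Ahr, L - 1)

/-- Failure successor under action `(1,2)`. -/
def fNew (L Ahr : ℕ) (x : S) : S := (0, min (x.2.1 + 1) Ahr, L)

/-- Per-device transition kernel `P_k(x' | x, a)`. -/
def Pk (lam : ℝ) (L Ahd Ahr : ℕ) (x x' : S) : Act → ℝ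
  | Act.idle => if x' = fCont Ahd Ahr x then 1 else 0
  | Act.cont =>
      (if x' = sCont L Ahd Ahr x then lam else 0) +
        (if x' = fCont Ahd Ahr x then 1 - lam else 0)
  | Act.new =>
      (if x' = sNew L Ahr x then lam else 0) +
        (if x' = fNew L Ahr x then 1 - lam else 0)

/-- Per-device state space `{0,…,Âd} × {0,…,Âr} × {1,…,L}`. -/
def spaceS (L Ahd Ahr : ℕ) : Finset S :=
  Finset.range (Ahd + 1) ×ˢ (Finset.range (Ahr + 1) ×ˢ Finset.Icc 1 L)

/-- Joint state space `X = X_1 × ⋯ × X_K`. -/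
def jointSpace {K : ℕ} (L Ahd Ahr : Fin K → ℕ) : Finset (Fin K → S) :=
  Fintype.piFinset fun k => spaceS (L k) (Ahd k) (Ahr k)

/-- Joint transition kernel `P(X' | X, w) = ∏ₖ P_k(X'_k | X_k, w_k)`. -/
def Pjoint {K : ℕ} (lam : Fin K → ℝ) (L Ahd Ahr : Fin K → ℕ)
    (x x' : Fin K → S) (w : Fin K → Act) : ℝ :=
  ∏ k, Pk (lam k) (L k) (Ahd k) (Ahr k) (x k) (x' k) (w k)

/-- Feasible joint actions: at most `M` devices are scheduled. -/
def feasible (K M : ℕ) : Finset (Fin K → Act) :=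
  Finset.univ.filter fun w => (Finset.univ.filter fun k => w k ≠ Act.idle).card ≤ M

lemma feasible_nonempty (K M : ℕ) : (feasible K M).Nonempty := by
  refine ⟨fun _ => Act.idle, Finset.mem_filter.mpr ⟨Finset.mem_univ _, ?_⟩⟩
  simp

/-- The state–action cost `J_V(X, w) = Σₖ A_{r,k} + Σ_{X'∈X} P(X'|X,w) V(X')`. -/
def J {K : ℕ} (lam : Fin K → ℝ) (L Ahd Ahr : Fin K → ℕ)
    (V : (Fin K → S) → ℝ) (x : Fin K → S) (w : Fin K → Act) : ℝ :=
  (∑ k, ((x k).2.1 : ℝ)) +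
    ∑ x' ∈ jointSpace L Ahd Ahr, Pjoint lam L Ahd Ahr x x' w * V x'

/-- Componentwise order on per-device states:
`(A¹_d, A¹_r, D¹) ⪯ (A²_d, A²_r, D²)` iff `A¹_d ≤ A²_d`, `A¹_r ≤ A²_r`, `D¹ = D²`. -/
def xleS (x y : S) : Prop := x.1 ≤ y.1 ∧ x.2.1 ≤ y.2.1 ∧ x.2.2 = y.2.2


/-- Next-state function: successor of `x` under action `a` with success flag `b`. -/
def nx (Lk Ahd Ahr : ℕ) (a : Act) (b : Bool) (x : S) : S :=
  match a, b with
  | Act.idle, _ => fCont Ahd Ahr x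
  | Act.cont, true => sCont Lk Ahd Ahr x
  | Act.cont, false => fCont Ahd Ahr x
  | Act.new, true => sNew Lk Ahr x
  | Act.new, false => fNew Lk Ahr x

/-- Probability weight of success flag `b` under action `a`. -/
def wt (lam : ℝ) (a : Act) (b : Bool) : ℝ :=
  match a, b with
  | Act.idle, true => 1
  | Act.idle, false => 0
  | _, true => lam
  | _, false => 1 - lam

lemma wt_nonneg {lam : ℝ} (h0 : 0 < lam) (h1 : lam ≤ 1) (a : Act) (b : Bool) :
    0 ≤ wt lam a b := by
  cases a <;> cases b <;> simp [wt] <;> linarith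

lemma Pk_expand (lam : ℝ) (Lk Ahd Ahr : ℕ) (x x' : S) (a : Act) :
    Pk lam Lk Ahd Ahr x x' a =
      ∑ b : Bool, (if x' = nx Lk Ahd Ahr a b x then wt lam a b else 0) := by
  cases a <;> simp only [Pk, Fintype.sum_bool] <;> split_ifs <;> simp_all [nx, wt]

lemma nx_mem {Lk Ahd Ahr : ℕ} (hL : 2 ≤ Lk) (hAd : 1 ≤ Ahd) (a : Act) (b : Bool)
    {x : S} (hx : x ∈ spaceS Lk Ahd Ahr) : nx Lk Ahd Ahr a b x ∈ spaceS Lk Ahd Ahr := by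
  simp only [spaceS, Finset.mem_product, Finset.mem_range, Finset.mem_Icc] at hx ⊢
  obtain ⟨h1, h2, h3, h4⟩ := hx
  cases a <;> cases b <;>
    simp only [nx, sCont, fCont, sNew, fNew] <;> (try split_ifs) <;> (try simp) <;> omega

lemma nx_mono (Lk Ahd Ahr : ℕ) (a : Act) (b : Bool) {x y : S} (h : xleS x y) :
    xleS (nx Lk Ahd Ahr a b x) (nx Lk Ahd Ahr a b y) := by
  obtain ⟨h1, h2, h3⟩ := h
  cases a <;> cases b <;>
    simp only [nx, sCont, fCont, sNew, fNew, xleS, h3] <;> (try split_ifs) <;>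
    (try simp) <;> omega

/-- Pushforward form of the expected-value sum. -/
lemma sum_push {K : ℕ} (lam : Fin K → ℝ) (L Ahd Ahr : Fin K → ℕ)
    (hL : ∀ k, 2 ≤ L k) (hAd : ∀ k, 1 ≤ Ahd k)
    (V : (Fin K → S) → ℝ) (x : Fin K → S) (hx : x ∈ jointSpace L Ahd Ahr)
    (w : Fin K → Act) :
    ∑ x'' ∈ jointSpace L Ahd Ahr, Pjoint lam L Ahd Ahr x x'' w * V x'' =
      ∑ b ∈ Fintype.piFinset (fun _ : Fin K => (Finset.univ : Finset Bool)),
        (∏ k, wt (lam k) (w k) (b k)) *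
          V (fun k => nx (L k) (Ahd k) (Ahr k) (w k) (b k) (x k)) := by
  have hxk : ∀ k, x k ∈ spaceS (L k) (Ahd k) (Ahr k) := Fintype.mem_piFinset.mp hx
  have key : ∀ x'' : Fin K → S, Pjoint lam L Ahd Ahr x x'' w =
      ∑ b ∈ Fintype.piFinset (fun _ : Fin K => (Finset.univ : Finset Bool)),
        ∏ k, (if x'' k = nx (L k) (Ahd k) (Ahr k) (w k) (b k) (x k)
          then wt (lam k) (w k) (b k) else 0) := by
    intro x''
    unfold Pjoint
    simp_rw [Pk_expand]
    exact Finset.prod_univ_sum _ _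
  simp_rw [key, Finset.sum_mul]
  rw [Finset.sum_comm]
  refine Finset.sum_congr rfl fun b _ => ?_
  set c : Fin K → S := fun k => nx (L k) (Ahd k) (Ahr k) (w k) (b k) (x k) with hc
  have hprod : ∀ x'' : Fin K → S,
      (∏ k, (if x'' k = c k then wt (lam k) (w k) (b k) else 0)) =
        if x'' = c then ∏ k, wt (lam k) (w k) (b k) else 0 := by
    intro x''
    by_cases h : x'' = c
    · subst h; simp
    · rw [if_neg h]
      obtain ⟨k, hk⟩ := Function.ne_iff.mp h
      exact Finset.prod_eq_zero (Finset.mem_univ k) (if_neg hk)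
  change ∑ x_1 ∈ jointSpace L Ahd Ahr,
      (∏ k, if x_1 k = c k then wt (lam k) (w k) (b k) else 0) * V x_1 = _
  simp_rw [hprod, ite_mul, zero_mul]
  rw [Finset.sum_ite_eq' (jointSpace L Ahd Ahr) c]
  rw [if_pos]
  exact Fintype.mem_piFinset.mpr fun k => nx_mem (hL k) (hAd k) _ _ (hxk k)

/-- Monotonicity of `J` in the state. -/
lemma J_mono {K : ℕ} (lam : Fin K → ℝ) (L Ahd Ahr : Fin K → ℕ)
    (hlam : ∀ k, 0 < lam k ∧ lam k ≤ 1)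
    (hL : ∀ k, 2 ≤ L k) (hAd : ∀ k, 1 ≤ Ahd k)
    (V : (Fin K → S) → ℝ)
    (hV : ∀ x1 ∈ jointSpace L Ahd Ahr, ∀ x2 ∈ jointSpace L Ahd Ahr,
      (∀ k, xleS (x1 k) (x2 k)) → V x1 ≤ V x2)
    {x y : Fin K → S} (hx : x ∈ jointSpace L Ahd Ahr) (hy : y ∈ jointSpace L Ahd Ahr)
    (hxy : ∀ k, xleS (x k) (y k)) (w : Fin K → Act) :
    J lam L Ahd Ahr V x w ≤ J lam L Ahd Ahr V y w := by
  have hxk : ∀ k, x k ∈ spaceS (L k) (Ahd k) (Ahr k) := Fintype.mem_piFinset.mp hx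
  have hyk : ∀ k, y k ∈ spaceS (L k) (Ahd k) (Ahr k) := Fintype.mem_piFinset.mp hy
  unfold J
  refine add_le_add ?_ ?_
  · exact Finset.sum_le_sum fun k _ => Nat.cast_le.mpr (hxy k).2.1
  · rw [sum_push lam L Ahd Ahr hL hAd V x hx w, sum_push lam L Ahd Ahr hL hAd V y hy w]
    refine Finset.sum_le_sum fun b _ => ?_
    refine mul_le_mul_of_nonneg_left ?_
      (Finset.prod_nonneg fun k _ => wt_nonneg (hlam k).1 (hlam k).2 _ _)
    refine hV _ (Fintype.mem_piFinset.mpr fun k => nx_mem (hL k) (hAd k) _ _ (hxk k))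
      _ (Fintype.mem_piFinset.mpr fun k => nx_mem (hL k) (hAd k) _ _ (hyk k))
      fun k => nx_mono _ _ _ _ _ (hxy k)


/-- equation (15): persistence of the optimal action. If `w` is
optimal at `X`, then `w` remains optimal at any `X'` obtained from `X` by
increasing the device AoI `A_{d,k}` at devices `k` with `w_k = (1,2)`. -/
theorem persistence_of_optimal_action
    (K M : ℕ) (hK : 1 ≤ K) (hM1 : 1 ≤ M) (hM2 : M ≤ K)
    (lam : Fin K → ℝ) (L Ahd Ahr : Fin K → ℕ)
    (hlam : ∀ k, 0 < lam k ∧ lam k ≤ 1)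
    (hL : ∀ k, 2 ≤ L k) (hAd : ∀ k, 1 ≤ Ahd k) (hAr : ∀ k, 1 ≤ Ahr k)
    (V : (Fin K → S) → ℝ)
    (hV : ∀ x1 ∈ jointSpace L Ahd Ahr, ∀ x2 ∈ jointSpace L Ahd Ahr,
      (∀ k, xleS (x1 k) (x2 k)) → V x1 ≤ V x2)
    (w : Fin K → Act) (hw : w ∈ feasible K M)
    (x x' : Fin K → S)
    (hx : x ∈ jointSpace L Ahd Ahr) (hx' : x' ∈ jointSpace L Ahd Ahr)
    (hr : ∀ k, (x' k).2.1 = (x k).2.1)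
    (hd : ∀ k, (x' k).2.2 = (x k).2.2)
    (hnew : ∀ k, w k = Act.new → (x k).1 ≤ (x' k).1)
    (hoth : ∀ k, w k ≠ Act.new → (x' k).1 = (x k).1)
    (hopt : ∀ w'' ∈ feasible K M,
      J lam L Ahd Ahr V x w ≤ J lam L Ahd Ahr V x w'') :
    ∀ w'' ∈ feasible K M,
      J lam L Ahd Ahr V x' w ≤ J lam L Ahd Ahr V x' w'' := by
  intro w'' hw''
  have hJeq : J lam L Ahd Ahr V x' w = J lam L Ahd Ahr V x w := by
    have hnx : ∀ (b : Fin K → Bool) k,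
        nx (L k) (Ahd k) (Ahr k) (w k) (b k) (x' k) =
          nx (L k) (Ahd k) (Ahr k) (w k) (b k) (x k) := by
      intro b k
      by_cases hwk : w k = Act.new
      · cases hb : b k <;> simp [hwk, nx, sNew, fNew, hr k]
      · have hxx : x' k = x k :=
          Prod.ext (hoth k hwk) (Prod.ext (hr k) (hd k))
        rw [hxx]
    unfold J
    rw [sum_push lam L Ahd Ahr hL hAd V x hx w,
        sum_push lam L Ahd Ahr hL hAd V x' hx' w]
    congr 1
    · exact Finset.sum_congr rfl fun k _ => by rw [hr k]
    · refine Finset.sum_congr rfl fun b _ => ?_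
      congr 1
      exact congrArg V (funext fun k => hnx b k)
  have hle : J lam L Ahd Ahr V x w'' ≤ J lam L Ahd Ahr V x' w'' := by
    refine J_mono lam L Ahd Ahr hlam hL hAd V hV hx hx' (fun k => ?_) w''
    by_cases hwk : w k = Act.new
    · exact ⟨hnew k hwk, (hr k).ge, (hd k).symm⟩
    · exact ⟨(hoth k hwk).ge, (hr k).ge, (hd k).symm⟩
  calc J lam L Ahd Ahr V x' w = J lam L Ahd Ahr V x w := hJeq
    _ ≤ J lam L Ahd Ahr V x w'' := hopt w'' hw''
    _ ≤ J lam L Ahd Ahr V x' w'' := hle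

end AoI
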